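/- Let m ≥ 1 and let F = ℚ(x_1,…,x_{2m}) be the field of rational functions in 2m independent variables. Let A be the 2m×2m skew-symmetric matrix over F with entries a_{ij} = (x_i − x_j)/(x_i + x_j). Then Pf(A) = ∏_{1≤i<j≤2m} (x_i − x_j)/(x_i + x_j) (Schur's Pfaffian identity). -/

import Mathlib

open scoped BigOperators

noncomputable section

/-- The Pfaffian of an `N×N` matrix (`0` if `N` is odd), defined as the signed sum over
perfect matchings of `{0,…,N−1}`: each matching `{{i_1,j_1},…}` is encoded by the unique
permutation `σ` with `σ(2l) < σ(2l+1)` for all `l` and `σ(0) < σ(2) < ⋯`, its sign is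
the sign of the permutation `σ` (which sends `(0,1,2,3,…)` to `(i_1,j_1,i_2,j_2,…)`),
and its weight is `∏_l A_{σ(2l), σ(2l+1)}`. -/
noncomputable def pfaff {N : ℕ} {R : Type*} [CommRing R] (A : Matrix (Fin N) (Fin N) R) : R :=
  if N % 2 = 1 then 0 else
    ∑ σ ∈ Finset.univ.filter (fun σ : Equiv.Perm (Fin N) =>
        (∀ p q : Fin N, (p : ℕ) % 2 = 0 → (q : ℕ) = (p : ℕ) + 1 → σ p < σ q) ∧
        (∀ p q : Fin N, (p : ℕ) % 2 = 0 → (q : ℕ) % 2 = 0 → p < q → σ p < σ q)),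
      ((Equiv.Perm.sign σ : ℤ) : R) *
        ∏ p : Fin N,
          (if h : (p : ℕ) % 2 = 0 ∧ (p : ℕ) + 1 < N then A (σ p) (σ ⟨(p : ℕ) + 1, h.2⟩)
           else 1)

/-- The field `ℚ(x_1, …, x_{2m})` of rational functions in `2m` variables. -/
abbrev RatFunField (m : ℕ) : Type :=
  FractionRing (MvPolynomial (Fin (2 * m)) ℚ)

/-- The variable `x_i` viewed inside `ℚ(x_1, …, x_{2m})`. -/
noncomputable def xvar {m : ℕ} (i : Fin (2 * m)) : RatFunField m :=
  algebraMap (MvPolynomial (Fin (2 * m)) ℚ) (RatFunField m) (MvPolynomial.X i)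

open Polynomial Finset Equiv Equiv.Perm


namespace SchurAux
variable {n : ℕ}

/-- The increasing enumeration of `Fin (n+2) \ {0, j}` (for `j ≠ 0`). -/
def emb (j : Fin (n + 2)) (k : Fin n) : Fin (n + 2) :=
  j.succAbove ⟨(k : ℕ) + 1, by omega⟩

lemma emb_strictMono (j : Fin (n + 2)) : StrictMono (emb j) := by
  intro a b h
  have h' : (a : ℕ) < (b : ℕ) := h
  exact Fin.succAbove_lt_succAbove_iff.mpr (Fin.mk_lt_mk.mpr (by omega))

lemma emb_inj (j : Fin (n + 2)) : Function.Injective (emb j) :=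
  (emb_strictMono j).injective

lemma emb_ne (j : Fin (n + 2)) (k : Fin n) : emb j k ≠ j := Fin.succAbove_ne _ _

lemma emb_ne_zero (j : Fin (n + 2)) (k : Fin n) : emb j k ≠ 0 := by
  unfold emb
  rcases lt_or_ge (Fin.castSucc ⟨(k : ℕ) + 1, by omega⟩) j with h | h
  · rw [Fin.succAbove_of_castSucc_lt _ _ h]
    simp [Fin.ext_iff]
  · rw [Fin.succAbove_of_le_castSucc _ _ h]
    simp [Fin.ext_iff]

lemma emb_surj {j : Fin (n + 2)} (hj : j ≠ 0) {x : Fin (n + 2)} (hx0 : x ≠ 0) (hxj : x ≠ j) :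
    ∃ k, emb j k = x := by
  obtain ⟨z, hz⟩ := Fin.exists_succAbove_eq hxj
  have hz0 : (z : ℕ) ≠ 0 := by
    intro h0
    have : z = 0 := Fin.ext h0
    rw [this] at hz
    rw [Fin.succAbove_of_castSucc_lt _ _ (by
      rw [Fin.castSucc_zero]; exact Fin.pos_of_ne_zero hj)] at hz
    exact hx0 (by simpa using hz.symm)
  refine ⟨⟨(z : ℕ) - 1, by omega⟩, ?_⟩
  unfold emb
  have : (⟨(z : ℕ) - 1 + 1, by omega⟩ : Fin (n + 1)) = z := Fin.ext (by simp; omega)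
  rw [this, hz]

def rho (j : Fin (n + 2)) : Perm (Fin (n + 2)) := (Fin.cycleRange j)⁻¹ * Equiv.swap 0 1

def embEquiv : Fin 2 ⊕ Fin n ≃ Fin (n + 2) :=
  finSumFinEquiv.trans (finCongr (Nat.add_comm 2 n))

lemma embEquiv_inl (i : Fin 2) : (embEquiv (n := n)) (Sum.inl i) = ⟨(i : ℕ), by omega⟩ := by
  unfold embEquiv
  simp [finSumFinEquiv_apply_left, Fin.ext_iff]

lemma embEquiv_inr (p : Fin n) : embEquiv (Sum.inr p) = ⟨(p : ℕ) + 2, by omega⟩ := by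
  unfold embEquiv
  simp [finSumFinEquiv_apply_right, Fin.ext_iff]
  try omega

def iota (σ : Perm (Fin n)) : Perm (Fin (n + 2)) :=
  Equiv.permCongr embEquiv (Equiv.Perm.sumCongr 1 σ)

lemma iota_apply_lt (σ : Perm (Fin n)) (v : Fin (n + 2)) (hv : (v : ℕ) < 2) :
    iota σ v = v := by
  unfold iota
  rw [Equiv.permCongr_apply]
  have h1 : (embEquiv (n := n)).symm v = Sum.inl ⟨(v : ℕ), hv⟩ := by
    rw [Equiv.symm_apply_eq, embEquiv_inl]
  rw [h1]
  simp only [Equiv.Perm.sumCongr_apply, Sum.map_inl, Equiv.Perm.coe_one, id_eq]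
  rw [embEquiv_inl]

lemma iota_apply_two (σ : Perm (Fin n)) (p : Fin n) :
    iota σ ⟨(p : ℕ) + 2, by omega⟩ = ⟨(σ p : ℕ) + 2, by omega⟩ := by
  unfold iota
  rw [Equiv.permCongr_apply]
  have h1 : (embEquiv (n := n)).symm ⟨(p : ℕ) + 2, by omega⟩ = Sum.inr p := by
    rw [Equiv.symm_apply_eq, embEquiv_inr]
  rw [h1]
  simp only [Equiv.Perm.sumCongr_apply, Sum.map_inr]
  rw [embEquiv_inr]

lemma sign_iota (σ : Perm (Fin n)) : Perm.sign (iota σ) = Perm.sign σ := by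
  unfold iota
  rw [Equiv.Perm.sign_permCongr, Equiv.Perm.sign_sumCongr]
  simp

lemma rho_apply_zero {j : Fin (n + 2)} (hj : j ≠ 0) : rho j 0 = 0 := by
  unfold rho
  have h1 : Equiv.swap (0 : Fin (n+2)) 1 0 = 1 := Equiv.swap_apply_left _ _
  rw [Perm.mul_apply, h1]
  show (Fin.cycleRange j).symm 1 = 0
  have : (1 : Fin (n + 2)) = Fin.succ (0 : Fin (n + 1)) := by simp [Fin.ext_iff]
  rw [this, Fin.cycleRange_symm_succ]
  exact Fin.succAbove_ne_zero_zero hj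

lemma rho_apply_one (j : Fin (n + 2)) : rho j 1 = j := by
  unfold rho
  have h1 : Equiv.swap (0 : Fin (n+2)) 1 1 = 0 := Equiv.swap_apply_right _ _
  rw [Perm.mul_apply, h1]
  exact Fin.cycleRange_symm_zero j

lemma rho_apply_two (j : Fin (n + 2)) (v : Fin n) :
    rho j ⟨(v : ℕ) + 2, by omega⟩ = emb j v := by
  unfold rho
  have hne0 : (⟨(v : ℕ) + 2, by omega⟩ : Fin (n+2)) ≠ 0 := by simp [Fin.ext_iff]
  have hne1 : (⟨(v : ℕ) + 2, by omega⟩ : Fin (n+2)) ≠ 1 := by simp [Fin.ext_iff]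
  rw [Perm.mul_apply, Equiv.swap_apply_of_ne_of_ne hne0 hne1]
  show (Fin.cycleRange j).symm _ = emb j v
  have : (⟨(v : ℕ) + 2, by omega⟩ : Fin (n+2)) = Fin.succ ⟨(v : ℕ) + 1, by omega⟩ := by
    simp [Fin.ext_iff]
  rw [this, Fin.cycleRange_symm_succ]
  rfl

lemma sign_rho (j : Fin (n + 2)) : Perm.sign (rho j) = (-1) ^ ((j : ℕ) + 1) := by
  unfold rho
  rw [Perm.sign_mul, Perm.sign_inv, Fin.sign_cycleRange,
    Equiv.Perm.sign_swap (by simp [Fin.ext_iff])]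
  rw [pow_succ]

def extPerm (j : Fin (n + 2)) (σ : Perm (Fin n)) : Perm (Fin (n + 2)) := rho j * iota σ

lemma extPerm_zero {j : Fin (n + 2)} (hj : j ≠ 0) (σ : Perm (Fin n)) : extPerm j σ 0 = 0 := by
  rw [extPerm, Perm.mul_apply, iota_apply_lt σ 0 (by simp), rho_apply_zero hj]

lemma extPerm_one (j : Fin (n + 2)) (σ : Perm (Fin n)) : extPerm j σ 1 = j := by
  have h1 : ((1 : Fin (n+2)) : ℕ) < 2 := by simp
  rw [extPerm, Perm.mul_apply, iota_apply_lt σ 1 h1, rho_apply_one]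

lemma extPerm_two (j : Fin (n + 2)) (σ : Perm (Fin n)) (p : Fin n) :
    extPerm j σ ⟨(p : ℕ) + 2, by omega⟩ = emb j (σ p) := by
  rw [extPerm, Perm.mul_apply, iota_apply_two, rho_apply_two]

lemma sign_extPerm (j : Fin (n + 2)) (σ : Perm (Fin n)) :
    Perm.sign (extPerm j σ) = (-1) ^ ((j : ℕ) + 1) * Perm.sign σ := by
  rw [extPerm, Perm.sign_mul, sign_rho, sign_iota]


def cond {N : ℕ} (σ : Perm (Fin N)) : Prop :=
  (∀ p q : Fin N, (p : ℕ) % 2 = 0 → (q : ℕ) = (p : ℕ) + 1 → σ p < σ q) ∧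
  (∀ p q : Fin N, (p : ℕ) % 2 = 0 → (q : ℕ) % 2 = 0 → p < q → σ p < σ q)

lemma apply_zero_of_cond {σ : Perm (Fin (n + 2))} (h : cond σ) : σ 0 = 0 := by
  have key : ∀ x : Fin (n + 2), x ≠ 0 → σ 0 < σ x := by
    intro x hx
    by_cases hx2 : (x : ℕ) % 2 = 0
    · exact h.2 0 x (by simp) hx2 (Fin.pos_of_ne_zero hx)
    · have hxval : (x : ℕ) ≠ 0 := fun h0 => hx (Fin.ext h0)
      set y : Fin (n + 2) := ⟨(x : ℕ) - 1, by omega⟩ with hy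
      have hy2 : (y : ℕ) % 2 = 0 := by simp only [hy]; omega
      have hxy : (x : ℕ) = (y : ℕ) + 1 := by simp only [hy]; omega
      have h1 : σ y < σ x := h.1 y x hy2 hxy
      by_cases hy0 : y = 0
      · rw [← hy0]; exact h1
      · exact lt_trans (h.2 0 y (by simp) hy2 (Fin.pos_of_ne_zero hy0)) h1
  by_contra h0
  have hs : σ.symm 0 ≠ 0 := by
    intro he
    apply h0
    have h2 := congrArg σ he
    rw [Equiv.apply_symm_apply] at h2
    exact h2.symm
  have := key (σ.symm 0) hs
  rw [Equiv.apply_symm_apply] at this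
  exact Fin.not_lt_zero _ this

lemma extPerm_val {j : Fin (n + 2)} {σ : Perm (Fin n)} (x : Fin (n + 2)) (hx : 2 ≤ (x : ℕ)) :
    extPerm j σ x = emb j (σ ⟨(x : ℕ) - 2, by omega⟩) := by
  have hlt := x.isLt
  have hval : x = ⟨((⟨(x : ℕ) - 2, by omega⟩ : Fin n) : ℕ) + 2, by omega⟩ := Fin.ext (by simp; omega)
  conv_lhs => rw [hval]
  rw [extPerm_two]

lemma cond_extPerm {j : Fin (n + 2)} (hj : j ≠ 0) {σ : Perm (Fin n)} (h : cond σ) :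
    cond (extPerm j σ) := by
  constructor
  · intro p q hp hq
    have hplt := p.isLt
    have hqlt := q.isLt
    by_cases hp0 : (p : ℕ) = 0
    · have hpe : p = 0 := Fin.ext hp0
      have hqe : q = 1 := Fin.ext (by rw [hq, hp0]; rfl)
      rw [hpe, hqe, extPerm_zero hj, extPerm_one]
      exact Fin.pos_of_ne_zero hj
    · have hp2 : 2 ≤ (p : ℕ) := by omega
      rw [extPerm_val p hp2, extPerm_val q (by omega)]
      apply emb_strictMono
      apply h.1
      · simp; omega
      · simp; omega
  · intro p q hp hq hpq
    have hplt := p.isLt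
    have hqlt := q.isLt
    have hpq' : (p : ℕ) < (q : ℕ) := hpq
    by_cases hp0 : (p : ℕ) = 0
    · have hpe : p = 0 := Fin.ext hp0
      rw [hpe, extPerm_zero hj, extPerm_val q (by omega)]
      exact Fin.pos_of_ne_zero (emb_ne_zero _ _)
    · have hp2 : 2 ≤ (p : ℕ) := by omega
      rw [extPerm_val p hp2, extPerm_val q (by omega)]
      apply emb_strictMono
      apply h.2
      · simp; omega
      · simp; omega
      · simp [Fin.lt_def]; omega


lemma exists_extPerm {σ : Perm (Fin (n + 2))} (h : cond σ) :
    ∃ (j : Fin (n + 2)) (σ' : Perm (Fin n)), j ≠ 0 ∧ cond σ' ∧ extPerm j σ' = σ := by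
  have hσ0 := apply_zero_of_cond h
  have hj : σ 1 ≠ 0 := by
    intro he
    have : (1 : Fin (n + 2)) = 0 := σ.injective (by rw [he, hσ0])
    simp [Fin.ext_iff] at this
  have hex : ∀ p : Fin n, ∃ k : Fin n, emb (σ 1) k = σ ⟨(p : ℕ) + 2, by omega⟩ := by
    intro p
    apply emb_surj hj
    · intro he
      have : (⟨(p : ℕ) + 2, by omega⟩ : Fin (n + 2)) = 0 := σ.injective (by rw [he, hσ0])
      simp [Fin.ext_iff] at this
    · intro he
      have : (⟨(p : ℕ) + 2, by omega⟩ : Fin (n + 2)) = 1 := σ.injective he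
      simp [Fin.ext_iff] at this
  set f : Fin n → Fin n := fun p => (hex p).choose with hfdef
  have hf : ∀ p, emb (σ 1) (f p) = σ ⟨(p : ℕ) + 2, by omega⟩ := fun p => (hex p).choose_spec
  have finj : Function.Injective f := by
    intro p q hpq
    have h2 : σ ⟨(p : ℕ) + 2, by omega⟩ = σ ⟨(q : ℕ) + 2, by omega⟩ := by
      rw [← hf p, ← hf q, hpq]
    have h3 := σ.injective h2
    exact Fin.ext (by simpa [Fin.ext_iff] using h3)
  set σ' : Perm (Fin n) := Equiv.ofBijective f (Finite.injective_iff_bijective.mp finj) with hσ'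
  have hσ'app : ∀ p, σ' p = f p := fun p => rfl
  have hfσ : ∀ p : Fin n, emb (σ 1) (σ' p) = σ ⟨(p : ℕ) + 2, by omega⟩ := by
    intro p; rw [hσ'app]; exact hf p
  refine ⟨σ 1, σ', hj, ?_, ?_⟩
  · constructor
    · intro p q hp hq
      have hqlt := q.isLt
      apply (emb_strictMono (σ 1)).lt_iff_lt.mp
      rw [hfσ p, hfσ q]
      apply h.1
      · simp; omega
      · simp; omega
    · intro p q hp hq hpq
      have hpq' : (p : ℕ) < (q : ℕ) := hpq
      apply (emb_strictMono (σ 1)).lt_iff_lt.mp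
      rw [hfσ p, hfσ q]
      apply h.2
      · simp; omega
      · simp; omega
      · exact Fin.mk_lt_mk.mpr (by omega)
  · apply Equiv.ext
    intro x
    have hlt := x.isLt
    by_cases h0 : (x : ℕ) = 0
    · rw [show x = 0 from Fin.ext h0, extPerm_zero hj, hσ0]
    · by_cases h1 : (x : ℕ) = 1
      · rw [show x = 1 from Fin.ext h1, extPerm_one]
      · rw [extPerm_val x (by omega), hfσ]
        apply congrArg
        simp [Fin.ext_iff]
        omega


variable {R : Type*} [CommRing R]

lemma weight_extPerm (A : Matrix (Fin (n + 2)) (Fin (n + 2)) R) {j : Fin (n + 2)}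
    (hj : j ≠ 0) (σ' : Perm (Fin n)) :
    (∏ p : Fin (n + 2), if h : (p : ℕ) % 2 = 0 ∧ (p : ℕ) + 1 < n + 2 then
        A (extPerm j σ' p) (extPerm j σ' ⟨(p : ℕ) + 1, h.2⟩) else 1)
      = A 0 j * ∏ p : Fin n, (if h : (p : ℕ) % 2 = 0 ∧ (p : ℕ) + 1 < n then
        A (emb j (σ' p)) (emb j (σ' ⟨(p : ℕ) + 1, h.2⟩)) else 1) := by
  rw [Fin.prod_univ_succ, Fin.prod_univ_succ]
  have h0 : ((0 : Fin (n + 2)) : ℕ) % 2 = 0 ∧ ((0 : Fin (n + 2)) : ℕ) + 1 < n + 2 := by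
    simp
  rw [dif_pos h0]
  have h1 : ¬ ((((0 : Fin (n + 1)).succ : Fin (n + 2)) : ℕ) % 2 = 0 ∧
      (((0 : Fin (n + 1)).succ : Fin (n + 2)) : ℕ) + 1 < n + 2) := by
    simp
  rw [dif_neg h1, one_mul]
  congr 1
  · -- first factor is A 0 j
    have e0 : extPerm j σ' 0 = 0 := extPerm_zero hj σ'
    have e1 : (⟨((0 : Fin (n+2)) : ℕ) + 1, h0.2⟩ : Fin (n + 2)) = 1 := by
      simp [Fin.ext_iff]
    rw [e1, e0, extPerm_one]
  · -- remaining product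
    apply Finset.prod_congr rfl
    intro i _
    have hi2 : ((i.succ.succ : Fin (n + 2)) : ℕ) = (i : ℕ) + 2 := by simp
    by_cases hc : (i : ℕ) % 2 = 0 ∧ (i : ℕ) + 1 < n
    · have hc' : ((i.succ.succ : Fin (n+2)) : ℕ) % 2 = 0 ∧
          ((i.succ.succ : Fin (n+2)) : ℕ) + 1 < n + 2 := by rw [hi2]; omega
      rw [dif_pos hc', dif_pos hc]
      have v1 : extPerm j σ' i.succ.succ = emb j (σ' i) := by
        rw [extPerm_val _ (by rw [hi2]; omega)]
        apply congrArg
        apply congrArg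
        exact Fin.ext (by simp [hi2])
      have v2 : extPerm j σ' ⟨((i.succ.succ : Fin (n+2)) : ℕ) + 1, hc'.2⟩
          = emb j (σ' ⟨(i : ℕ) + 1, hc.2⟩) := by
        rw [extPerm_val _ (by simp [hi2])]
        apply congrArg
        apply congrArg
        exact Fin.ext (by simp [hi2])
      rw [v1, v2]
    · have hc' : ¬ (((i.succ.succ : Fin (n+2)) : ℕ) % 2 = 0 ∧
          ((i.succ.succ : Fin (n+2)) : ℕ) + 1 < n + 2) := by rw [hi2]; omega
      rw [dif_neg hc', dif_neg hc]

lemma sign_cast_extPerm (j : Fin (n + 2)) (σ' : Perm (Fin n)) :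
    ((Perm.sign (extPerm j σ') : ℤ) : R)
      = (-1 : R) ^ ((j : ℕ) + 1) * ((Perm.sign σ' : ℤ) : R) := by
  rw [sign_extPerm]
  push_cast
  ring

lemma pfaff_even {N : ℕ} (hN : N % 2 = 0) (A : Matrix (Fin N) (Fin N) R) :
    pfaff A = ∑ σ ∈ Finset.univ.filter (fun σ : Equiv.Perm (Fin N) =>
        (∀ p q : Fin N, (p : ℕ) % 2 = 0 → (q : ℕ) = (p : ℕ) + 1 → σ p < σ q) ∧
        (∀ p q : Fin N, (p : ℕ) % 2 = 0 → (q : ℕ) % 2 = 0 → p < q → σ p < σ q)),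
      ((Equiv.Perm.sign σ : ℤ) : R) *
        ∏ p : Fin N,
          (if h : (p : ℕ) % 2 = 0 ∧ (p : ℕ) + 1 < N then A (σ p) (σ ⟨(p : ℕ) + 1, h.2⟩)
           else 1) := by
  rw [pfaff, if_neg (by omega)]

lemma pfaff_expand (hn : n % 2 = 0) (A : Matrix (Fin (n + 2)) (Fin (n + 2)) R) :
    pfaff A = ∑ j ∈ Finset.univ.filter (fun j : Fin (n + 2) => j ≠ 0),
      (-1 : R) ^ ((j : ℕ) + 1) * A 0 j *
        pfaff (Matrix.of fun p q : Fin n => A (emb j p) (emb j q)) := by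
  rw [pfaff_even (by omega) A]
  have hinner : ∀ j : Fin (n + 2),
      pfaff (Matrix.of fun p q : Fin n => A (emb j p) (emb j q))
        = ∑ σ' ∈ Finset.univ.filter (fun σ : Equiv.Perm (Fin n) =>
            (∀ p q : Fin n, (p : ℕ) % 2 = 0 → (q : ℕ) = (p : ℕ) + 1 → σ p < σ q) ∧
            (∀ p q : Fin n, (p : ℕ) % 2 = 0 → (q : ℕ) % 2 = 0 → p < q → σ p < σ q)),
          ((Equiv.Perm.sign σ' : ℤ) : R) *
            ∏ p : Fin n,
              (if h : (p : ℕ) % 2 = 0 ∧ (p : ℕ) + 1 < n then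
                A (emb j (σ' p)) (emb j (σ' ⟨(p : ℕ) + 1, h.2⟩)) else 1) :=
    fun j => pfaff_even hn _
  simp only [hinner]
  simp only [Finset.mul_sum]
  rw [Finset.sum_sigma']
  refine (Finset.sum_bij
    (i := fun (x : Σ _ : Fin (n + 2), Perm (Fin n)) _ => extPerm x.1 x.2) ?_ ?_ ?_ ?_).symm
  · -- membership
    rintro ⟨j, σ'⟩ hx
    simp only [Finset.mem_sigma, Finset.mem_filter, Finset.mem_univ, true_and] at hx
    simp only [Finset.mem_filter, Finset.mem_univ, true_and]
    exact cond_extPerm hx.1 hx.2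
  · -- injectivity
    rintro ⟨j, σ'⟩ hx ⟨k, τ⟩ hy he
    simp only at he
    have hjk : j = k := by
      rw [← extPerm_one j σ', ← extPerm_one k τ, he]
    subst hjk
    have hστ : σ' = τ := by
      apply Equiv.ext
      intro p
      apply emb_inj j
      rw [← extPerm_two j σ' p, ← extPerm_two j τ p, he]
    subst hστ
    rfl
  · -- surjectivity
    intro σ hσ
    simp only [Finset.mem_filter, Finset.mem_univ, true_and] at hσ
    obtain ⟨j, σ', hj, hc, hext⟩ := exists_extPerm hσ
    refine ⟨⟨j, σ'⟩, ?_, hext⟩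
    simp only [Finset.mem_sigma, Finset.mem_filter, Finset.mem_univ, true_and]
    exact ⟨hj, hc⟩
  · -- values
    rintro ⟨j, σ'⟩ hx
    simp only [Finset.mem_sigma, Finset.mem_filter, Finset.mem_univ, true_and] at hx
    simp only
    rw [weight_extPerm A hx.1 σ', sign_cast_extPerm]
    ring

end SchurAux


variable {M : Type*} [CommMonoid M]

lemma double_prod_eq_pairs {N : ℕ} (g : Fin N → Fin N → M) :
    ∏ i, ∏ l ∈ Ioi i, g i l
      = ∏ p ∈ (univ ×ˢ univ).filter (fun p : Fin N × Fin N => p.1 < p.2), g p.1 p.2 := by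
  rw [Finset.prod_filter, Finset.prod_product]
  apply Finset.prod_congr rfl
  intro i _
  have h1 : Ioi i = univ.filter (fun l => i < l) := by
    ext l; simp
  rw [h1, Finset.prod_filter]

lemma pairs_split {k : ℕ} (w : Fin (k + 1)) (g : Fin (k + 1) → Fin (k + 1) → M) :
    ∏ i, ∏ l ∈ Ioi i, g i l
      = (∏ u ∈ univ.erase w, if u < w then g u w else g w u) *
        ∏ i : Fin k, ∏ l ∈ Ioi i, g (w.succAbove i) (w.succAbove l) := by
  classical
  rw [double_prod_eq_pairs g, double_prod_eq_pairs (fun i l => g (w.succAbove i) (w.succAbove l))]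
  rw [← Finset.prod_filter_mul_prod_filter_not
    ((univ ×ˢ univ).filter (fun p : Fin (k+1) × Fin (k+1) => p.1 < p.2))
    (fun p => p.1 = w ∨ p.2 = w)]
  congr 1
  · -- pairs containing w
    refine (Finset.prod_bij (i := fun (u : Fin (k+1)) _ =>
      if u < w then ((u, w) : Fin (k+1) × Fin (k+1)) else (w, u)) ?_ ?_ ?_ ?_).symm
    · intro u hu
      have hu' : u ≠ w := (Finset.mem_erase.mp hu).1
      by_cases h : u < w
      · rw [if_pos h]
        exact Finset.mem_filter.mpr ⟨Finset.mem_filter.mpr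
          ⟨Finset.mem_product.mpr ⟨mem_univ _, mem_univ _⟩, h⟩, Or.inr rfl⟩
      · have h2 : w < u := lt_of_le_of_ne (not_lt.mp h) (Ne.symm hu')
        rw [if_neg h]
        exact Finset.mem_filter.mpr ⟨Finset.mem_filter.mpr
          ⟨Finset.mem_product.mpr ⟨mem_univ _, mem_univ _⟩, h2⟩, Or.inl rfl⟩
    · intro u hu v hv he
      have hu' : u ≠ w := (Finset.mem_erase.mp hu).1
      have hv' : v ≠ w := (Finset.mem_erase.mp hv).1
      by_cases h1 : u < w <;> by_cases h2 : v < w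
      · rw [if_pos h1, if_pos h2] at he
        exact (Prod.ext_iff.mp he).1
      · rw [if_pos h1, if_neg h2] at he
        exact absurd (Prod.ext_iff.mp he).1 hu'
      · rw [if_neg h1, if_pos h2] at he
        exact absurd (Prod.ext_iff.mp he).1.symm hv'
      · rw [if_neg h1, if_neg h2] at he
        exact (Prod.ext_iff.mp he).2
    · rintro ⟨p1, p2⟩ hp
      have hp1 := Finset.mem_filter.mp hp
      have hlt : p1 < p2 := (Finset.mem_filter.mp hp1.1).2
      have hp2 := hp1.2
      dsimp only at hp2
      rcases hp2 with h1 | h2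
      · refine ⟨p2, Finset.mem_erase.mpr ⟨?_, mem_univ _⟩, ?_⟩
        · intro he; rw [h1, he] at hlt; exact lt_irrefl _ hlt
        · rw [if_neg (by rw [h1] at hlt; exact not_lt.mpr (le_of_lt hlt)), h1]
      · refine ⟨p1, Finset.mem_erase.mpr ⟨?_, mem_univ _⟩, ?_⟩
        · intro he; rw [h2, he] at hlt; exact lt_irrefl _ hlt
        · rw [if_pos (by rw [← h2]; exact hlt), h2]
    · intro u hu
      have hu' : u ≠ w := (Finset.mem_erase.mp hu).1
      by_cases h : u < w
      · rw [if_pos h, if_pos h]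
      · rw [if_neg h, if_neg h]
  · -- pairs avoiding w
    refine (Finset.prod_bij (i := fun (p : Fin k × Fin k) _ =>
      ((w.succAbove p.1, w.succAbove p.2) : Fin (k+1) × Fin (k+1))) ?_ ?_ ?_ ?_).symm
    · rintro ⟨p1, p2⟩ hp
      have hlt : p1 < p2 := (Finset.mem_filter.mp hp).2
      refine Finset.mem_filter.mpr ⟨Finset.mem_filter.mpr
        ⟨Finset.mem_product.mpr ⟨mem_univ _, mem_univ _⟩,
          Fin.strictMono_succAbove w hlt⟩, ?_⟩
      dsimp only
      push_neg
      exact ⟨Fin.succAbove_ne w p1, Fin.succAbove_ne w p2⟩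
    · rintro ⟨p1, p2⟩ _ ⟨q1, q2⟩ _ he
      dsimp only at he
      have he' := Prod.ext_iff.mp he
      have hinj := (Fin.strictMono_succAbove w).injective
      exact Prod.ext (hinj he'.1) (hinj he'.2)
    · rintro ⟨p1, p2⟩ hp
      have hp' := Finset.mem_filter.mp hp
      have hlt : p1 < p2 := (Finset.mem_filter.mp hp'.1).2
      have hw := hp'.2
      dsimp only at hw
      push_neg at hw
      obtain ⟨q1, hq1⟩ := Fin.exists_succAbove_eq (Ne.symm hw.1).symm
      obtain ⟨q2, hq2⟩ := Fin.exists_succAbove_eq (Ne.symm hw.2).symm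
      refine ⟨(q1, q2), ?_, by simp [hq1, hq2]⟩
      refine Finset.mem_filter.mpr ⟨Finset.mem_product.mpr ⟨mem_univ _, mem_univ _⟩, ?_⟩
      dsimp only
      have := (Fin.strictMono_succAbove w).lt_iff_lt (a := q1) (b := q2)
      rw [hq1, hq2] at this
      exact this.mp hlt
    · rintro ⟨p1, p2⟩ _
      rfl



variable {F : Type*} [Field F] [CharZero F]

lemma prod_neg_univ {n : ℕ} (f : Fin n → F) : ∏ k, -(f k) = (-1)^n * ∏ k, f k := by
  rw [show (fun k => -(f k)) = fun k => (-1) * f k by funext k; ring]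
  rw [Finset.prod_mul_distrib, Finset.prod_const]
  simp

lemma key_identity {n : ℕ} (hn : n % 2 = 1) (y : Fin n → F) (t : F)
    (h0 : ∀ i, y i ≠ 0)
    (hd : ∀ i j, i ≠ j → y i - y j ≠ 0)
    (hs : ∀ i j, i ≠ j → y i + y j ≠ 0)
    (ht : ∀ i, t + y i ≠ 0) :
    ∑ j, (t - y j) / (t + y j) * ∏ k ∈ univ.erase j, ((y j + y k) / (y j - y k))
      = ∏ k, (t - y k) / (t + y k) := by
  classical
  set c : Fin n → F := fun j => ∏ k ∈ univ.erase j, ((y j + y k) / (y j - y k)) with hc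
  set P : Fin n → F[X] := fun j => (X - C (y j)) * ∏ k ∈ univ.erase j, (X + C (y k)) with hP
  set Q : F[X] := ∏ k, (X - C (y k)) with hQ
  set Q' : F[X] := ∏ k, (X + C (y k)) with hQ'
  set lam : F := (∑ j, c j) - 1 with hlam
  -- monicity and degrees
  have hPm : ∀ j, (P j).Monic := fun j =>
    (monic_X_sub_C (y j)).mul (monic_prod_of_monic _ _ fun k _ => monic_X_add_C (y k))
  have hn1 : 1 ≤ n := by omega
  have hPdeg : ∀ j, (P j).natDegree = n := by
    intro j
    have h1 : (∏ k ∈ univ.erase j, (X + C (y k)) : F[X]).natDegree = n - 1 := by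
      rw [natDegree_prod_of_monic _ _ fun k _ => monic_X_add_C (y k)]
      simp [card_erase_of_mem]
    rw [hP, (monic_X_sub_C (y j)).natDegree_mul
      (monic_prod_of_monic _ _ fun k _ => monic_X_add_C (y k)), natDegree_X_sub_C, h1]
    omega
  have hQm : Q.Monic := monic_prod_of_monic _ _ fun k _ => monic_X_sub_C (y k)
  have hQdeg : Q.natDegree = n := by
    rw [hQ, natDegree_prod_of_monic _ _ fun k _ => monic_X_sub_C (y k)]; simp
  have hQ'm : Q'.Monic := monic_prod_of_monic _ _ fun k _ => monic_X_add_C (y k)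
  have hQ'deg : Q'.natDegree = n := by
    rw [hQ', natDegree_prod_of_monic _ _ fun k _ => monic_X_add_C (y k)]; simp
  set H : F[X] := (∑ j, C (c j) * P j) - Q - C lam * Q' with hH
  -- degree bound
  have hdegle : H.natDegree ≤ n := by
    apply le_trans (natDegree_sub_le _ _)
    apply max_le
    · apply le_trans (natDegree_sub_le _ _)
      apply max_le
      · apply natDegree_sum_le_of_forall_le
        intro j _
        apply le_trans (natDegree_mul_le)
        simp [natDegree_C, hPdeg j]
      · exact le_of_eq hQdeg
    · apply le_trans (natDegree_mul_le); simp [natDegree_C, hQ'deg]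
  -- top coefficient vanishes
  have hcoeff : H.coeff n = 0 := by
    have h1 : (∑ j, C (c j) * P j).coeff n = ∑ j, c j := by
      rw [finset_sum_coeff]
      refine Finset.sum_congr rfl fun j _ => ?_
      rw [coeff_C_mul]
      have := (hPm j).coeff_natDegree
      rw [hPdeg j] at this
      rw [this, mul_one]
    have h2 : Q.coeff n = 1 := by have := hQm.coeff_natDegree; rwa [hQdeg] at this
    have h3 : (C lam * Q').coeff n = lam := by
      rw [coeff_C_mul]
      have := hQ'm.coeff_natDegree; rw [hQ'deg] at this; rw [this, mul_one]
    rw [hH, coeff_sub, coeff_sub, h1, h2, h3, hlam]; ring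
  -- evaluation at -(y i) vanishes
  have heval : ∀ i, H.eval (-(y i)) = 0 := by
    intro i
    have hQ'0 : Q'.eval (-(y i)) = 0 := by
      rw [hQ', eval_prod]
      apply Finset.prod_eq_zero (mem_univ i)
      simp
    have hsum : (∑ j, C (c j) * P j).eval (-(y i)) = Q.eval (-(y i)) := by
      rw [eval_finset_sum]
      rw [Finset.sum_eq_single i]
      · -- main term
        have hPi : (P i).eval (-(y i)) = (-(2 * y i)) * ∏ k ∈ univ.erase i, (y k - y i) := by
          rw [hP]
          simp only [eval_mul, eval_sub, eval_X, eval_C, eval_prod, eval_add]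
          rw [Finset.prod_congr rfl (fun k _ => by ring :
            ∀ k ∈ univ.erase i, -(y i) + y k = y k - y i)]
          ring
        rw [eval_C_mul, hPi, hc]
        have hcomb : (∏ k ∈ univ.erase i, ((y i + y k) / (y i - y k))) *
            (∏ k ∈ univ.erase i, (y k - y i)) = ∏ k ∈ univ.erase i, (-(y i + y k)) := by
          rw [← Finset.prod_mul_distrib]
          refine Finset.prod_congr rfl fun k hk => ?_
          have hik : i ≠ k := fun h => (Finset.mem_erase.mp hk).1 h.symm
          have := hd i k hik
          field_simp
          ring
        have hQe : Q.eval (-(y i)) = (-(2 * y i)) * ∏ k ∈ univ.erase i, (-(y i + y k)) := by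
          rw [hQ, eval_prod]
          simp only [eval_sub, eval_X, eval_C]
          rw [Finset.prod_congr rfl (fun k _ => by ring :
            ∀ k ∈ univ, -(y i) - y k = -(y i + y k))]
          rw [← Finset.mul_prod_erase _ (fun k => -(y i + y k)) (mem_univ i)]
          ring
        rw [hQe, ← hcomb]; ring
      · intro j _ hj
        rw [eval_C_mul, hP]
        simp only [eval_mul, eval_prod, eval_add, eval_sub, eval_X, eval_C]
        have : ∏ k ∈ univ.erase j, (-(y i) + y k) = 0 := by
          apply Finset.prod_eq_zero (Finset.mem_erase.mpr ⟨fun h => hj h.symm, mem_univ i⟩)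
          ring
        rw [this]; ring
      · simp
    rw [hH]
    simp only [eval_sub, eval_mul, eval_C, hQ'0, hsum]
    ring
  -- H = 0
  have hinj : Function.Injective (fun i : Fin n => -(y i)) := by
    intro a b hab
    by_contra hne
    exact hd a b hne (by simp at hab; rw [hab]; ring)
  have hH0 : H = 0 := by
    by_contra h
    have hlt : H.natDegree < n := by
      rcases lt_or_eq_of_le hdegle with h' | h'
      · exact h'
      · exfalso
        apply h
        have : H.leadingCoeff = 0 := by rw [leadingCoeff, h', hcoeff]
        exact leadingCoeff_eq_zero.mp this
    exact h (Polynomial.eq_zero_of_natDegree_lt_card_of_eval_eq_zero H hinj heval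
      (by simpa using hlt))
  have hmain : (∑ j, C (c j) * P j) = Q + C lam * Q' := by
    have h : (∑ j, C (c j) * P j) - Q - C lam * Q' = 0 := by rw [← hH]; exact hH0
    have h2 := sub_eq_zero.mp h
    rw [sub_eq_iff_eq_add] at h2
    rw [h2]; ring
  -- lam = 0 via evaluation at 0
  have hprodny : (∏ k, y k) ≠ 0 := Finset.prod_ne_zero_iff.mpr fun k _ => h0 k
  have hlam0 : lam = 0 := by
    have he := congrArg (eval 0) hmain
    rw [eval_finset_sum] at he
    simp only [eval_add, eval_mul, eval_C] at he
    have hL : ∀ j, ((P j).eval 0) = -(∏ k, y k) := by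
      intro j
      rw [hP]
      simp only [eval_mul, eval_sub, eval_prod, eval_add, eval_X, eval_C, zero_sub, zero_add]
      rw [← Finset.mul_prod_erase _ y (mem_univ j)]
      ring
    simp only [hL] at he
    have hQe : Q.eval 0 = -(∏ k, y k) := by
      rw [hQ, eval_prod]
      simp only [eval_sub, eval_X, eval_C, zero_sub]
      rw [prod_neg_univ]
      rw [show ((-1 : F))^n = -1 by
        rw [show n = 2 * (n/2) + 1 by omega, pow_succ, pow_mul]; simp]
      ring
    have hQ'e : Q'.eval 0 = ∏ k, y k := by
      rw [hQ', eval_prod]; simp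
    rw [hQe, hQ'e, ← Finset.sum_mul] at he
    -- he : (∑ c j) * (-(∏ y)) = -(∏ y) + lam * ∏ y
    have h2 : (2 : F) * lam * (∏ k, y k) = 0 := by
      rw [hlam]; linear_combination -he
    have := mul_eq_zero.mp h2
    rcases this with h' | h'
    · rcases mul_eq_zero.mp h' with h'' | h''
      · exact absurd h'' two_ne_zero
      · exact h''
    · exact absurd h' hprodny
  rw [hlam0] at hmain
  simp only [map_zero, zero_mul, add_zero] at hmain
  -- conclude via evaluation at t
  have he := congrArg (eval t) hmain
  rw [eval_finset_sum] at he
  rw [Finset.prod_div_distrib]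
  have hQ'ne : (∏ k, (t + y k)) ≠ 0 := Finset.prod_ne_zero_iff.mpr fun k _ => ht k
  rw [eq_div_iff hQ'ne, Finset.sum_mul]
  have hterm : ∀ j, ((t - y j) / (t + y j) * c j) * (∏ k, (t + y k))
      = (C (c j) * P j).eval t := by
    intro j
    rw [eval_C_mul, hP]
    simp only [eval_mul, eval_sub, eval_prod, eval_add, eval_X, eval_C]
    rw [← Finset.mul_prod_erase _ (fun k => t + y k) (mem_univ j)]
    have hdj : (t - y j) / (t + y j) * (t + y j) = t - y j := div_mul_cancel₀ _ (ht j)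
    linear_combination (c j * ∏ k ∈ univ.erase j, (t + y k)) * hdj
  rw [Finset.sum_congr rfl (fun j _ => hterm j), he, hQ, eval_prod]
  simp

section Main
open Finset SchurAux

variable {F : Type*} [Field F] [CharZero F]

lemma asym (u v : F) : (u - v) / (u + v) = -((v - u) / (v + u)) := by
  rw [← neg_div, neg_sub, add_comm]

theorem pfaff_schur : ∀ n : ℕ, n % 2 = 0 → ∀ y : Fin n → F,
    (∀ i, y i ≠ 0) → (∀ i j : Fin n, i ≠ j → y i - y j ≠ 0) →
    (∀ i j : Fin n, i ≠ j → y i + y j ≠ 0) →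
    pfaff (Matrix.of fun i j : Fin n => (y i - y j) / (y i + y j))
      = ∏ i : Fin n, ∏ j ∈ Finset.Ioi i, (y i - y j) / (y i + y j) := by
  intro n
  induction n using Nat.strong_induction_on with
  | _ n ih =>
  match n with
  | 0 =>
    intro _ y _ _ _
    rw [pfaff_even (by norm_num)]
    rw [Finset.filter_true_of_mem (fun σ _ => ⟨fun p _ _ _ => p.elim0, fun p _ _ _ _ => p.elim0⟩)]
    have h1 : ∀ σ : Equiv.Perm (Fin 0),
        ((Equiv.Perm.sign σ : ℤ) : F) *
          ∏ p : Fin 0, (if h : (p : ℕ) % 2 = 0 ∧ (p : ℕ) + 1 < 0 then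
            (Matrix.of fun i j : Fin 0 => (y i - y j) / (y i + y j)) (σ p) (σ ⟨(p : ℕ) + 1, h.2⟩)
            else 1) = 1 := by
      intro σ
      have hσ : σ = 1 := Equiv.ext fun x => x.elim0
      subst hσ
      simp
    rw [Finset.sum_congr rfl (fun σ _ => h1 σ)]
    simp [Fintype.card_perm]
  | 1 => intro h; omega
  | (k + 2) =>
    intro hn y h0 hd hs
    have hk : k % 2 = 0 := by omega
    rw [pfaff_expand hk]
    -- inner pfaffians via the induction hypothesis
    have hsub : ∀ j : Fin (k + 2),
        pfaff (Matrix.of fun p q : Fin k =>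
          (Matrix.of fun i l : Fin (k+2) => (y i - y l) / (y i + y l)) (emb j p) (emb j q))
          = ∏ i : Fin k, ∏ l ∈ Finset.Ioi i,
              (y (emb j i) - y (emb j l)) / (y (emb j i) + y (emb j l)) := by
      intro j
      exact ih k (by omega) (by omega) (fun v => y (emb j v))
        (fun v => h0 _)
        (fun v u hvu => hd _ _ (fun he => hvu (emb_inj j he)))
        (fun v u hvu => hs _ _ (fun he => hvu (emb_inj j he)))
    rw [Finset.sum_congr rfl (fun j _ => by rw [hsub j])]
    simp only [Matrix.of_apply]
    -- reindex the sum over j ≠ 0 by w : Fin (k+1), j = w.succ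
    have hfil : (univ.filter (fun j : Fin (k + 2) => j ≠ 0)) = Finset.Ioi 0 := by
      ext j; simp [Fin.pos_iff_ne_zero]
    rw [hfil, Fin.sum_Ioi_zero]
    -- the RHS: peel off index 0
    rw [Fin.prod_univ_succ, Fin.prod_Ioi_zero]
    simp only [Fin.prod_Ioi_succ]
    -- notation
    set b : Fin (k+1) → Fin (k+1) → F := fun i l => (y i.succ - y l.succ)/(y i.succ + y l.succ)
      with hb
    set Pb : F := ∏ i : Fin (k+1), ∏ l ∈ Finset.Ioi i, b i l with hPb
    -- rewrite emb w.succ as succAbove composed with succ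
    have hemb : ∀ (w : Fin (k+1)) (v : Fin k), emb w.succ v = (w.succAbove v).succ := by
      intro w v
      unfold SchurAux.emb
      have : (⟨(v : ℕ) + 1, by omega⟩ : Fin (k + 1)) = v.succ := Fin.ext (by simp)
      rw [this, Fin.succ_succAbove_succ]
    have hBne : ∀ w : Fin (k+1), (∏ u ∈ univ.erase w, b w u) ≠ 0 := by
      intro w
      apply Finset.prod_ne_zero_iff.mpr
      intro u hu
      have huw : w ≠ u := fun he => (Finset.mem_erase.mp hu).1 he.symm
      have hne : w.succ ≠ u.succ := fun he => huw (Fin.succ_injective _ he)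
      exact div_ne_zero (hd _ _ hne) (hs _ _ hne)
    -- per-term computation
    have hterm : ∀ w : Fin (k+1),
        (-1 : F) ^ ((w.succ : ℕ) + 1) * ((y 0 - y w.succ) / (y 0 + y w.succ)) *
          ∏ i : Fin k, ∏ l ∈ Finset.Ioi i,
            (y (emb w.succ i) - y (emb w.succ l)) / (y (emb w.succ i) + y (emb w.succ l))
        = ((y 0 - y w.succ) / (y 0 + y w.succ) *
            ∏ u ∈ univ.erase w, ((y w.succ + y u.succ) / (y w.succ - y u.succ))) * Pb := by
      intro w
      have hM : ∏ i : Fin k, ∏ l ∈ Finset.Ioi i,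
          (y (emb w.succ i) - y (emb w.succ l)) / (y (emb w.succ i) + y (emb w.succ l))
          = ∏ i : Fin k, ∏ l ∈ Finset.Ioi i, b (w.succAbove i) (w.succAbove l) := by
        apply Finset.prod_congr rfl; intro i _
        apply Finset.prod_congr rfl; intro l _
        rw [hemb, hemb, hb]
      rw [hM]
      -- use pairs_split
      have hsplit := pairs_split w b
      rw [← hPb] at hsplit
      -- compute the erased product with signs
      have hE : (∏ u ∈ univ.erase w, if u < w then b u w else b w u)
          = (-1 : F) ^ (w : ℕ) * ∏ u ∈ univ.erase w, b w u := by
        have h1 : ∀ u ∈ univ.erase w, (if u < w then b u w else b w u)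
            = (if u < w then (-1 : F) else 1) * b w u := by
          intro u _
          by_cases h : u < w
          · rw [if_pos h, if_pos h, hb]
            dsimp only
            rw [asym]
            ring
          · rw [if_neg h, if_neg h, one_mul]
        rw [Finset.prod_congr rfl h1, Finset.prod_mul_distrib]
        congr 1
        rw [Finset.prod_ite, Finset.prod_const, Finset.prod_const]
        have h2 : (univ.erase w).filter (fun u => u < w) = Finset.Iio w := by
          ext u
          simp only [Finset.mem_filter, Finset.mem_erase, Finset.mem_univ, true_and,
            Finset.mem_Iio, and_iff_right_iff_imp]
          exact fun h => ⟨ne_of_lt h, trivial⟩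
        rw [h2, Fin.card_Iio]
        simp
      rw [hE] at hsplit
      -- solve for M
      have hMeq : ∏ i : Fin k, ∏ l ∈ Finset.Ioi i, b (w.succAbove i) (w.succAbove l)
          = Pb / ((-1 : F) ^ (w : ℕ) * ∏ u ∈ univ.erase w, b w u) := by
        rw [eq_div_iff (by
          apply mul_ne_zero _ (hBne w)
          exact pow_ne_zero _ (by norm_num))]
        rw [hsplit]; ring
      rw [hMeq]
      have hsq : (-1 : F) ^ ((w : ℕ)) * (-1 : F) ^ ((w : ℕ)) = 1 := by
        rw [← pow_add, show (w:ℕ) + (w:ℕ) = 2 * (w:ℕ) by ring, pow_mul]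
        norm_num
      have hpow : (-1 : F) ^ ((w.succ : ℕ) + 1) = (-1 : F) ^ (w : ℕ) := by
        rw [Fin.val_succ, show ((w:ℕ) + 1) + 1 = (w:ℕ) + 2 by ring, pow_add]
        norm_num
      rw [hpow]
      have hinvprod : ∏ u ∈ univ.erase w, ((y w.succ + y u.succ) / (y w.succ - y u.succ))
          = (∏ u ∈ univ.erase w, b w u)⁻¹ := by
        rw [← Finset.prod_inv_distrib]
        apply Finset.prod_congr rfl
        intro u _
        rw [hb]
        dsimp only
        rw [inv_div]
      rw [hinvprod]
      set B : F := ∏ u ∈ univ.erase w, b w u with hB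
      have hBne' : B ≠ 0 := hBne w
      have hpowne : ((-1 : F) ^ (w : ℕ)) ≠ 0 := pow_ne_zero _ (by norm_num)
      have key1 : Pb / ((-1 : F) ^ (w : ℕ) * B) = (-1 : F) ^ (w : ℕ) * (Pb / B) := by
        rw [div_eq_iff (mul_ne_zero hpowne hBne')]
        rw [mul_mul_mul_comm, hsq, one_mul, div_mul_cancel₀ _ hBne']
      rw [key1]
      linear_combination (((y 0 - y w.succ) / (y 0 + y w.succ)) * (Pb / B)) * hsq
    -- now sum up and apply the key identity
    rw [Finset.sum_congr rfl (fun w _ => hterm w), ← Finset.sum_mul]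
    congr 1
    exact key_identity (n := k + 1) (by omega) (fun u => y u.succ) (y 0)
      (fun i => h0 _)
      (fun i j hij => hd _ _ (fun he => hij (Fin.succ_injective _ he)))
      (fun i j hij => hs _ _ (fun he => hij (Fin.succ_injective _ he)))
      (fun i => hs 0 i.succ (Ne.symm (Fin.succ_ne_zero i)))
end Main

section Final
variable {m : ℕ}

lemma xvar_ne_zero (i : Fin (2 * m)) : xvar i ≠ 0 := by
  unfold xvar
  rw [show (0 : RatFunField m) = algebraMap (MvPolynomial (Fin (2 * m)) ℚ) _ 0 by simp]
  intro h
  exact MvPolynomial.X_ne_zero i (IsFractionRing.injective (MvPolynomial (Fin (2 * m)) ℚ) _ h)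

lemma xvar_sub_ne_zero {i j : Fin (2 * m)} (hij : i ≠ j) : xvar i - xvar j ≠ 0 := by
  unfold xvar
  rw [← map_sub]
  intro h
  rw [show (0 : RatFunField m) = algebraMap (MvPolynomial (Fin (2 * m)) ℚ) _ 0 by simp] at h
  have h2 := IsFractionRing.injective (MvPolynomial (Fin (2 * m)) ℚ) (RatFunField m) h
  rw [sub_eq_zero] at h2
  exact hij (MvPolynomial.X_injective h2)

lemma xvar_add_ne_zero {i j : Fin (2 * m)} (hij : i ≠ j) : xvar i + xvar j ≠ 0 := by
  unfold xvar
  rw [← map_add]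
  intro h
  rw [show (0 : RatFunField m) = algebraMap (MvPolynomial (Fin (2 * m)) ℚ) _ 0 by simp] at h
  have h2 := IsFractionRing.injective (MvPolynomial (Fin (2 * m)) ℚ) (RatFunField m) h
  have h3 := congrArg (MvPolynomial.coeff (Finsupp.single i 1)) h2
  rw [MvPolynomial.coeff_add, MvPolynomial.coeff_X, MvPolynomial.coeff_X'] at h3
  rw [if_neg (fun (he : Finsupp.single j (1 : ℕ) = Finsupp.single i 1) => hij (by
    have := Finsupp.single_left_inj (α := Fin (2*m)) (M := ℕ) (a := j) (a' := i) one_ne_zero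
    exact (this.mp he).symm))] at h3
  simp at h3

end Final

/-- **Schur's Pfaffian identity.**  Let `m ≥ 1` and `F = ℚ(x_1,…,x_{2m})`.
Let `A` be the `2m × 2m` skew-symmetric matrix with entries
`a_{ij} = (x_i − x_j)/(x_i + x_j)`.  Then
`Pf(A) = ∏_{1 ≤ i < j ≤ 2m} (x_i − x_j)/(x_i + x_j)`. -/
theorem schur_pfaffian_identity (m : ℕ) (hm : 1 ≤ m) :
    pfaff (Matrix.of fun i j : Fin (2 * m) =>
        (xvar i - xvar j) / (xvar i + xvar j)) =
      ∏ i : Fin (2 * m), ∏ j ∈ Finset.Ioi i,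
        (xvar i - xvar j) / (xvar i + xvar j) :=
  pfaff_schur (2 * m) (by omega) xvar (fun i => xvar_ne_zero i)
    (fun i j hij => xvar_sub_ne_zero hij) (fun i j hij => xvar_add_ne_zero hij)

end
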